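/- arXiv:2310.12602 — 7 statements merged into one kernel-verified Lean document; each statement's English description precedes it below -/
import Mathlib

section
/- Fix reals x > 0 and Λ > 0, and define f(λ) = x⁴ + x³·(√(x² − 4λ) − 2λ) + 2λ(Λ − λ) for λ ∈ (0, x²/4]. Then f is twice differentiable on (0, x²/4) with second derivative f''(λ) = −4x³/((x² − 4λ)^{3/2}) − 4 < 0, f(λ) → 2x⁴ as λ → 0⁺, and the equation f(λ) = 0 has at most one solution λ ∈ (0, x²/4]. -/
theorem stmt4 (x Λ : ℝ) (hx : 0 < x) (hΛ : 0 < Λ) :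
    let f : ℝ → ℝ := fun l => x ^ 4 + x ^ 3 * (Real.sqrt (x ^ 2 - 4 * l) - 2 * l)
      + 2 * l * (Λ - l)
    (∀ l ∈ Set.Ioo 0 (x ^ 2 / 4),
        DifferentiableAt ℝ f l ∧
        HasDerivAt (deriv f) (-(4 * x ^ 3) / Real.sqrt ((x ^ 2 - 4 * l) ^ 3) - 4) l ∧
        -(4 * x ^ 3) / Real.sqrt ((x ^ 2 - 4 * l) ^ 3) - 4 < 0) ∧
      Filter.Tendsto f (nhdsWithin 0 (Set.Ioi 0)) (nhds (2 * x ^ 4)) ∧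
      {l : ℝ | l ∈ Set.Ioc 0 (x ^ 2 / 4) ∧ f l = 0}.Subsingleton := by
  intro f
  -- auxiliary facts
  set g : ℝ → ℝ := fun l => -(2 * x ^ 3) / Real.sqrt (x ^ 2 - 4 * l) - 2 * x ^ 3 + 2 * Λ - 4 * l
    with hg
  have hcont : Continuous f := by
    have h1 : Continuous fun l : ℝ => Real.sqrt (x ^ 2 - 4 * l) :=
      Real.continuous_sqrt.comp (by continuity)
    fun_prop
  have hsq : ∀ l ∈ Set.Ioo 0 (x ^ 2 / 4), 0 < x ^ 2 - 4 * l := by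
    intro l hl
    nlinarith [hl.2]
  have hderf : ∀ l ∈ Set.Ioo 0 (x ^ 2 / 4), HasDerivAt f (g l) l := by
    intro l hl
    have hs : 0 < Real.sqrt (x ^ 2 - 4 * l) := Real.sqrt_pos.2 (hsq l hl)
    have h1 : HasDerivAt (fun l : ℝ => x ^ 2 - 4 * l) (-4) l := by
      have := ((hasDerivAt_id' l).const_mul 4).const_sub (x ^ 2)
      exact this.congr_deriv (by ring)
    have h2 : HasDerivAt (fun l : ℝ => Real.sqrt (x ^ 2 - 4 * l))
        (-4 / (2 * Real.sqrt (x ^ 2 - 4 * l))) l := h1.sqrt (hsq l hl).ne'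
    have h3 : HasDerivAt f
        (0 + x ^ 3 * (-4 / (2 * Real.sqrt (x ^ 2 - 4 * l)) - 2)
          + (2 * (Λ - l) + 2 * l * (-1))) l := by
      refine HasDerivAt.add (HasDerivAt.add (hasDerivAt_const l (x ^ 4)) ?_) ?_
      · exact ((h2.sub (by simpa using (hasDerivAt_id l).const_mul 2)).const_mul (x ^ 3))
      · have := (((hasDerivAt_id' l).const_mul 2).mul
          ((hasDerivAt_id' l).const_sub Λ))
        exact this.congr_deriv (by ring)
    convert h3 using 1
    rw [hg]
    field_simp
    ring
  have hderg : ∀ l ∈ Set.Ioo 0 (x ^ 2 / 4),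
      HasDerivAt g (-(4 * x ^ 3) / Real.sqrt ((x ^ 2 - 4 * l) ^ 3) - 4) l := by
    intro l hl
    have ht : 0 < x ^ 2 - 4 * l := hsq l hl
    have hs : 0 < Real.sqrt (x ^ 2 - 4 * l) := Real.sqrt_pos.2 ht
    have hsqcube : Real.sqrt ((x ^ 2 - 4 * l) ^ 3) = Real.sqrt (x ^ 2 - 4 * l) ^ 3 := by
      rw [show (x ^ 2 - 4 * l) ^ 3 = (Real.sqrt (x ^ 2 - 4 * l) ^ 3) ^ 2 by
        rw [← pow_mul, pow_mul', Real.sq_sqrt ht.le]]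
      exact Real.sqrt_sq (by positivity)
    have h1 : HasDerivAt (fun l : ℝ => x ^ 2 - 4 * l) (-4) l := by
      have := ((hasDerivAt_id' l).const_mul 4).const_sub (x ^ 2)
      exact this.congr_deriv (by ring)
    have h2 : HasDerivAt (fun l : ℝ => Real.sqrt (x ^ 2 - 4 * l))
        (-4 / (2 * Real.sqrt (x ^ 2 - 4 * l))) l := h1.sqrt ht.ne'
    have h3 : HasDerivAt (fun l : ℝ => (Real.sqrt (x ^ 2 - 4 * l))⁻¹)
        (-(-4 / (2 * Real.sqrt (x ^ 2 - 4 * l))) / (Real.sqrt (x ^ 2 - 4 * l)) ^ 2) l :=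
      h2.inv hs.ne'
    have h4 : HasDerivAt g
        (-(2 * x ^ 3) * (-(-4 / (2 * Real.sqrt (x ^ 2 - 4 * l))) /
          (Real.sqrt (x ^ 2 - 4 * l)) ^ 2) - 0 + 0 - 4) l := by
      refine HasDerivAt.sub (HasDerivAt.add (HasDerivAt.sub ?_ (hasDerivAt_const l _))
        (hasDerivAt_const l _)) (by simpa using (hasDerivAt_id l).const_mul 4)
      have := h3.const_mul (-(2 * x ^ 3))
      simpa [div_eq_mul_inv] using this
    convert h4 using 1
    rw [hsqcube]
    have hu2 : Real.sqrt (x ^ 2 - 4 * l) ^ 2 = x ^ 2 - 4 * l := Real.sq_sqrt ht.le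
    field_simp
    linear_combination (0 * x ^ 3 * Real.sqrt (x ^ 2 - 4 * l)) * hu2
  have hneg : ∀ l ∈ Set.Ioo 0 (x ^ 2 / 4),
      -(4 * x ^ 3) / Real.sqrt ((x ^ 2 - 4 * l) ^ 3) - 4 < 0 := by
    intro l hl
    have ht : 0 < x ^ 2 - 4 * l := hsq l hl
    have : 0 < Real.sqrt ((x ^ 2 - 4 * l) ^ 3) := Real.sqrt_pos.2 (by positivity)
    have : -(4 * x ^ 3) / Real.sqrt ((x ^ 2 - 4 * l) ^ 3) < 0 :=
      div_neg_of_neg_of_pos (by have := pow_pos hx 3; linarith) this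
    linarith
  have hderiv_eq : ∀ l ∈ Set.Ioo 0 (x ^ 2 / 4), deriv f =ᶠ[nhds l] g := by
    intro l hl
    filter_upwards [isOpen_Ioo.mem_nhds hl] with y hy
    exact (hderf y hy).deriv
  have hder2 : ∀ l ∈ Set.Ioo 0 (x ^ 2 / 4),
      HasDerivAt (deriv f) (-(4 * x ^ 3) / Real.sqrt ((x ^ 2 - 4 * l) ^ 3) - 4) l := by
    intro l hl
    exact (hderg l hl).congr_of_eventuallyEq (hderiv_eq l hl)
  have htend : Filter.Tendsto f (nhdsWithin 0 (Set.Ioi 0)) (nhds (2 * x ^ 4)) := by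
    have : f 0 = 2 * x ^ 4 := by
      simp only [f]
      rw [mul_zero, sub_zero, Real.sqrt_sq hx.le]
      ring
    have h2 : Filter.Tendsto f (nhdsWithin 0 (Set.Ioi 0)) (nhds (f 0)) :=
      (hcont.tendsto 0).mono_left nhdsWithin_le_nhds
    rwa [this] at h2
  refine ⟨fun l hl => ⟨(hderf l hl).differentiableAt, hder2 l hl, hneg l hl⟩, htend, ?_⟩
  -- uniqueness
  have hx4 : (0:ℝ) < x ^ 2 / 4 := by positivity
  have hconc : StrictConcaveOn ℝ (Set.Ioc 0 (x ^ 2 / 4)) f := by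
    apply strictConcaveOn_of_deriv2_neg (convex_Ioc _ _) hcont.continuousOn
    intro l hl
    rw [interior_Ioc] at hl
    have := (hder2 l hl).deriv
    have h2 : deriv^[2] f l = deriv (deriv f) l := rfl
    rw [h2, this]
    exact hneg l hl
  have key : ∀ a b : ℝ, a ∈ Set.Ioc 0 (x ^ 2 / 4) → b ∈ Set.Ioc 0 (x ^ 2 / 4) →
      f a = 0 → f b = 0 → a < b → False := by
    intro a b ha hb hfa hfb hab
    -- get t ∈ (0, a) with f t > 0
    have hpos : ∀ᶠ l in nhdsWithin 0 (Set.Ioi 0), 0 < f l :=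
      htend.eventually (eventually_gt_nhds (by positivity))
    have hmem : Set.Ioo 0 a ∈ nhdsWithin 0 (Set.Ioi 0) :=
      Ioo_mem_nhdsGT_of_mem ⟨le_refl 0, ha.1⟩
    obtain ⟨t, htf, ht⟩ := (hpos.and (Filter.eventually_mem_set.2 hmem)).exists
    have htD : t ∈ Set.Ioc 0 (x ^ 2 / 4) := ⟨ht.1, le_trans ht.2.le ha.2⟩
    have htb : t ≠ b := ne_of_lt (lt_trans ht.2 hab)
    set s : ℝ := (b - a) / (b - t) with hs
    set r : ℝ := (a - t) / (b - t) with hr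
    have hbt : 0 < b - t := by linarith [ht.2]
    have hs0 : 0 < s := div_pos (by linarith) hbt
    have hr0 : 0 < r := div_pos (by linarith [ht.2]) hbt
    have hsr : s + r = 1 := by
      rw [hs, hr, ← add_div, div_eq_one_iff_eq hbt.ne']
      ring
    have hcomb : s • t + r • b = a := by
      rw [smul_eq_mul, smul_eq_mul, hs, hr, div_mul_eq_mul_div, div_mul_eq_mul_div,
        ← add_div, div_eq_iff hbt.ne']
      ring
    have := hconc.2 htD hb htb hs0 hr0 hsr
    rw [hcomb, hfa, hfb, smul_eq_mul, smul_eq_mul, mul_zero, add_zero] at this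
    nlinarith
  intro a ha b hb
  rcases lt_trichotomy a b with h | h | h
  · exact absurd (key a b ha.1 hb.1 ha.2 hb.2 h) id
  · exact h
  · exact absurd (key b a hb.1 ha.1 hb.2 ha.2 h) id
end

section
/- Fix reals x > 0 and Λ > 0, and define g(λ) = x⁴ − x³·(√(x² − 4λ) + 2λ) + 2λ(Λ − λ) for λ ∈ (0, x²/4]. Then g is twice differentiable on (0, x²/4) with second derivative g''(λ) = 4x³/((x² − 4λ)^{3/2}) − 4 > 0, g(λ) → 0 as λ → 0⁺, and the equation g(λ) = 0 has at most one solution λ ∈ (0, x²/4]. -/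
theorem stmt5 (x Λ : ℝ) (hx : 0 < x) (hΛ : 0 < Λ) :
    let g : ℝ → ℝ := fun l => x ^ 4 - x ^ 3 * (Real.sqrt (x ^ 2 - 4 * l) + 2 * l)
      + 2 * l * (Λ - l)
    (∀ l ∈ Set.Ioo 0 (x ^ 2 / 4),
        DifferentiableAt ℝ g l ∧
        HasDerivAt (deriv g) (4 * x ^ 3 / Real.sqrt ((x ^ 2 - 4 * l) ^ 3) - 4) l ∧
        0 < 4 * x ^ 3 / Real.sqrt ((x ^ 2 - 4 * l) ^ 3) - 4) ∧
      Filter.Tendsto g (nhdsWithin 0 (Set.Ioi 0)) (nhds 0) ∧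
      {l : ℝ | l ∈ Set.Ioc 0 (x ^ 2 / 4) ∧ g l = 0}.Subsingleton := by
  intro g
  -- first derivative
  have hd1 : ∀ l : ℝ, 0 < x ^ 2 - 4 * l →
      HasDerivAt g (2 * x ^ 3 / Real.sqrt (x ^ 2 - 4 * l) - 2 * x ^ 3 + 2 * Λ - 4 * l) l := by
    intro l hl
    have hne : x ^ 2 - 4 * l ≠ 0 := ne_of_gt hl
    have hs : 0 < Real.sqrt (x ^ 2 - 4 * l) := Real.sqrt_pos.mpr hl
    have hinner : HasDerivAt (fun l : ℝ => x ^ 2 - 4 * l) (-4) l := by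
      simpa using ((hasDerivAt_id l).const_mul 4).const_sub (x ^ 2)
    have hsqrt : HasDerivAt (fun l : ℝ => Real.sqrt (x ^ 2 - 4 * l))
        (1 / (2 * Real.sqrt (x ^ 2 - 4 * l)) * (-4)) l :=
      (Real.hasDerivAt_sqrt hne).comp l hinner
    have h2 : HasDerivAt (fun l : ℝ => Real.sqrt (x ^ 2 - 4 * l) + 2 * l)
        (1 / (2 * Real.sqrt (x ^ 2 - 4 * l)) * (-4) + 2) l := by
      simpa [Pi.add_def] using hsqrt.add ((hasDerivAt_id l).const_mul 2)
    have h3 : HasDerivAt (fun l : ℝ => 2 * l * (Λ - l)) (2 * (Λ - l) + 2 * l * (-1)) l := by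
      simpa [Pi.mul_def] using (((hasDerivAt_id l).const_mul 2)).mul ((hasDerivAt_id l).const_sub Λ)
    have := ((h2.const_mul (x ^ 3)).const_sub (x ^ 4)).add h3
    simp only [Pi.add_def] at this
    refine HasDerivAt.congr_deriv this ?_
    field_simp
    ring
  -- second derivative
  have hd2 : ∀ l : ℝ, 0 < x ^ 2 - 4 * l →
      HasDerivAt (fun l : ℝ => 2 * x ^ 3 / Real.sqrt (x ^ 2 - 4 * l) - 2 * x ^ 3 + 2 * Λ - 4 * l)
        (4 * x ^ 3 / Real.sqrt ((x ^ 2 - 4 * l) ^ 3) - 4) l := by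
    intro l hl
    have hne : x ^ 2 - 4 * l ≠ 0 := ne_of_gt hl
    have hs : 0 < Real.sqrt (x ^ 2 - 4 * l) := Real.sqrt_pos.mpr hl
    have hinner : HasDerivAt (fun l : ℝ => x ^ 2 - 4 * l) (-4) l := by
      simpa using ((hasDerivAt_id l).const_mul 4).const_sub (x ^ 2)
    have hsqrt : HasDerivAt (fun l : ℝ => Real.sqrt (x ^ 2 - 4 * l))
        (1 / (2 * Real.sqrt (x ^ 2 - 4 * l)) * (-4)) l :=
      (Real.hasDerivAt_sqrt hne).comp l hinner
    have hinv : HasDerivAt (fun l : ℝ => (Real.sqrt (x ^ 2 - 4 * l))⁻¹)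
        (-(1 / (2 * Real.sqrt (x ^ 2 - 4 * l)) * (-4)) / (Real.sqrt (x ^ 2 - 4 * l)) ^ 2) l :=
      hsqrt.inv (ne_of_gt hs)
    have h4 : HasDerivAt (fun l : ℝ => 4 * l) 4 l := by
      simpa using (hasDerivAt_id l).const_mul 4
    have := (((hinv.const_mul (2 * x ^ 3)).sub_const (2 * x ^ 3)).add_const (2 * Λ)).sub h4
    have heq : (fun l : ℝ => 2 * x ^ 3 * (Real.sqrt (x ^ 2 - 4 * l))⁻¹ - 2 * x ^ 3 + 2 * Λ - 4 * l)
        = (fun l : ℝ => 2 * x ^ 3 / Real.sqrt (x ^ 2 - 4 * l) - 2 * x ^ 3 + 2 * Λ - 4 * l) := by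
      funext y; rw [div_eq_mul_inv]
    simp only [Pi.sub_def] at this
    rw [heq] at this
    refine HasDerivAt.congr_deriv this ?_
    have h3 : Real.sqrt ((x ^ 2 - 4 * l) ^ 3)
        = (x ^ 2 - 4 * l) * Real.sqrt (x ^ 2 - 4 * l) := by
      rw [pow_succ, Real.sqrt_mul (sq_nonneg _), Real.sqrt_sq hl.le]
    have hsq : Real.sqrt (x ^ 2 - 4 * l) ^ 2 = x ^ 2 - 4 * l := Real.sq_sqrt hl.le
    rw [h3]
    field_simp
    linear_combination (-x ^ 3) * hsq
  have hopen : IsOpen {l : ℝ | 0 < x ^ 2 - 4 * l} :=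
    isOpen_lt continuous_const (continuous_const.sub (continuous_const.mul continuous_id))
  have hmem : ∀ l ∈ Set.Ioo 0 (x ^ 2 / 4), 0 < x ^ 2 - 4 * l := by
    intro l hl; have := hl.2; linarith
  have key : ∀ l ∈ Set.Ioo 0 (x ^ 2 / 4),
      DifferentiableAt ℝ g l ∧
      HasDerivAt (deriv g) (4 * x ^ 3 / Real.sqrt ((x ^ 2 - 4 * l) ^ 3) - 4) l ∧
      0 < 4 * x ^ 3 / Real.sqrt ((x ^ 2 - 4 * l) ^ 3) - 4 := by
    intro l hl
    have hl' := hmem l hl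
    refine ⟨(hd1 l hl').differentiableAt, ?_, ?_⟩
    · have hev : (fun l : ℝ => 2 * x ^ 3 / Real.sqrt (x ^ 2 - 4 * l) - 2 * x ^ 3 + 2 * Λ - 4 * l)
          =ᶠ[nhds l] deriv g := by
        filter_upwards [hopen.mem_nhds hl'] with y hy
        exact ((hd1 y hy).deriv).symm
      exact (hd2 l hl').congr_of_eventuallyEq hev.symm
    · have hu : 0 < x ^ 2 - 4 * l := hl'
      have h3pos : 0 < Real.sqrt ((x ^ 2 - 4 * l) ^ 3) :=
        Real.sqrt_pos.mpr (by positivity)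
      have hlt : Real.sqrt ((x ^ 2 - 4 * l) ^ 3) < x ^ 3 := by
        rw [show x ^ 3 = Real.sqrt ((x ^ 2) ^ 3) by
          rw [← Real.sqrt_sq (by positivity : (0:ℝ) ≤ x ^ 3)]; ring_nf]
        apply Real.sqrt_lt_sqrt (by positivity)
        exact pow_lt_pow_left₀ (by linarith [hl.1]) hu.le (by norm_num)
      rw [sub_pos, lt_div_iff₀ h3pos]
      nlinarith
  have hcont : Continuous g := by
    have : Continuous fun l : ℝ => Real.sqrt (x ^ 2 - 4 * l) :=
      Real.continuous_sqrt.comp (continuous_const.sub (continuous_const.mul continuous_id))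
    fun_prop
  have hg0 : Filter.Tendsto g (nhdsWithin 0 (Set.Ioi 0)) (nhds 0) := by
    have hg0' : g 0 = 0 := by
      show x ^ 4 - x ^ 3 * (Real.sqrt (x ^ 2 - 4 * 0) + 2 * 0) + 2 * 0 * (Λ - 0) = 0
      rw [mul_zero, sub_zero, mul_zero, zero_mul, Real.sqrt_sq hx.le]; ring
    have h := (hcont.tendsto 0).mono_left
      (nhdsWithin_le_nhds : nhdsWithin (0:ℝ) (Set.Ioi 0) ≤ nhds 0)
    rwa [hg0'] at h
  refine ⟨key, hg0, ?_⟩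
  -- uniqueness
  have hconv : StrictConvexOn ℝ (Set.Ioc 0 (x ^ 2 / 4)) g := by
    apply strictConvexOn_of_deriv2_pos (convex_Ioc _ _) hcont.continuousOn
    intro l hl
    rw [interior_Ioc] at hl
    have h := key l hl
    have h2 : deriv^[2] g l = deriv (deriv g) l := by
      simp [Function.iterate_succ, Function.comp]
    rw [h2, h.2.1.deriv]
    exact h.2.2
  have main : ∀ a b : ℝ, a ∈ Set.Ioc 0 (x ^ 2 / 4) → b ∈ Set.Ioc 0 (x ^ 2 / 4) →
      g a = 0 → g b = 0 → a < b → False := by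
    intro a b haI hbI ha0 hb0 hlt
    have ha_pos : 0 < a := haI.1
    have hax : a ≤ x ^ 2 / 4 := haI.2
    -- every c in (0,a) has g c > 0
    have hpos : ∀ c ∈ Set.Ioo (0:ℝ) a, 0 < g c := by
      intro c hc
      have hcb : c < b := hc.2.trans hlt
      have hbc : (0:ℝ) < b - c := by linarith
      have hcI : c ∈ Set.Ioc 0 (x ^ 2 / 4) := ⟨hc.1, by linarith [hc.2]⟩
      have ht : (0:ℝ) < (b - a) / (b - c) := div_pos (by linarith) hbc
      have hs : (0:ℝ) < (a - c) / (b - c) := by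
        apply div_pos (by linarith [hc.2]) hbc
      have hts : (b - a) / (b - c) + (a - c) / (b - c) = 1 := by
        field_simp
        ring
      have hcomb : ((b - a) / (b - c)) • c + ((a - c) / (b - c)) • b = a := by
        simp only [smul_eq_mul]
        field_simp
        ring
      have h := hconv.2 hcI hbI (ne_of_lt hcb) ht hs hts
      rw [hcomb] at h
      simp only [smul_eq_mul, ha0, hb0, mul_zero, add_zero] at h
      by_contra hng
      push_neg at hng
      nlinarith [mul_nonpos_of_nonneg_of_nonpos ht.le hng]
    have hd : 0 < g (a / 2) := hpos _ ⟨by linarith, by linarith⟩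
    -- g (a/2) < g c for c in (0, a/2)
    have hlt2 : ∀ c ∈ Set.Ioo (0:ℝ) (a / 2), g (a / 2) < g c := by
      intro c hc
      have hca : c < a := by linarith [hc.2]
      have hac : (0:ℝ) < a - c := by linarith
      have hcI : c ∈ Set.Ioc 0 (x ^ 2 / 4) := ⟨hc.1, by linarith [hc.2]⟩
      have ht : (0:ℝ) < (a / 2) / (a - c) := div_pos (by linarith) hac
      have hs : (0:ℝ) < (a / 2 - c) / (a - c) := by
        apply div_pos (by linarith [hc.2]) hac
      have hts : (a / 2) / (a - c) + (a / 2 - c) / (a - c) = 1 := by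
        field_simp; ring
      have hcomb : ((a / 2) / (a - c)) • c + ((a / 2 - c) / (a - c)) • a = a / 2 := by
        simp only [smul_eq_mul]
        field_simp
        ring
      have h := hconv.2 hcI ⟨ha_pos, hax⟩ (ne_of_lt hca) ht hs hts
      rw [hcomb] at h
      simp only [smul_eq_mul, ha0, mul_zero, add_zero] at h
      have htlt1 : (a / 2) / (a - c) < 1 := by
        rw [div_lt_one hac]; linarith [hc.2]
      have hgc : 0 < g c := hpos c ⟨hc.1, hca⟩
      nlinarith
    -- contradiction with limit
    have hev : ∀ᶠ c in nhdsWithin (0:ℝ) (Set.Ioi 0), g (a / 2) ≤ g c := by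
      filter_upwards [Ioo_mem_nhdsGT_of_mem
        (⟨le_refl (0:ℝ), by linarith⟩ : (0:ℝ) ∈ Set.Ico 0 (a / 2))] with c hc
      exact (hlt2 c hc).le
    have : g (a / 2) ≤ 0 := ge_of_tendsto hg0 hev
    linarith
  intro a ha b hb
  by_contra hne
  rcases lt_or_gt_of_ne hne with h | h
  · exact main a b ha.1 hb.1 ha.2 hb.2 h
  · exact main b a hb.1 ha.1 hb.2 ha.2 h
end

section
/- Let (λ_i)_{i∈ℤ₀} and (z_i)_{i∈ℤ₀} be positive reals with Σ_{l∈ℤ₀} λ_l z_l = S finite. Define D = 1 + λ₁²z₁² + 2S, x₀ = (1+S)/D, x₁ = (λ₁²z₁² + λ₁z₁)/D, and x_j = λ_j z_j / D for j ∈ ℤ₀, j ≠ 1. Then x₀ + Σ_{j∈ℤ₀} x_j = 1, and the vector (x_j)_{j∈ℤ} (with index 0 component x₀) satisfies the stationarity equations: x₀ = 1 − x₀·S/(1+S) − x₁·λ₁z₁/(1+λ₁z₁), x₁ = x₀·λ₁z₁/(1+S) + x₁·λ₁z₁/(1+λ₁z₁), and x_j = x₀·λ_j z_j/(1+S) for every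 j ∈ ℤ₀ with j ≠ 1. -/
/-- The index set `ℤ₀ = ℤ \ {0}`. -/
abbrev Z0 : Type := {i : ℤ // i ≠ 0}

theorem stmt9 (lam z : Z0 → ℝ) (hlam : ∀ i, 0 < lam i) (hz : ∀ i, 0 < z i)
    (hS : Summable fun l => lam l * z l) :
    let S : ℝ := ∑' l, lam l * z l
    let o : Z0 := ⟨1, one_ne_zero⟩
    let D : ℝ := 1 + (lam o) ^ 2 * (z o) ^ 2 + 2 * S
    let x0 : ℝ := (1 + S) / D
    let xv : Z0 → ℝ := fun j =>
      if j = o then ((lam o) ^ 2 * (z o) ^ 2 + lam o * z o) / D else lam j * z j / D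
    (x0 + ∑' j, xv j = 1) ∧
      x0 = 1 - x0 * S / (1 + S) - xv o * (lam o * z o) / (1 + lam o * z o) ∧
      xv o = x0 * (lam o * z o) / (1 + S) + xv o * (lam o * z o) / (1 + lam o * z o) ∧
      ∀ j : Z0, j ≠ o → xv j = x0 * (lam j * z j) / (1 + S) := by
  intro S o D x0 xv
  have ha0 : 0 < lam o * z o := mul_pos (hlam o) (hz o)
  have hS0 : 0 < S := Summable.tsum_pos hS (fun i => (mul_pos (hlam i) (hz i)).le) o ha0
  have hD0 : 0 < D := by
    have h2 : (0:ℝ) ≤ (lam o)^2 * (z o)^2 := by positivity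
    simp only [D]; linarith
  have hDne : D ≠ 0 := hD0.ne'
  have hSne : (1 + S) ≠ 0 := by linarith
  have hane : (1 + lam o * z o) ≠ 0 := by linarith
  have hxv : xv = fun j => lam j * z j / D + if j = o then (lam o * z o)^2 / D else 0 := by
    funext j
    by_cases h : j = o
    · subst h; simp only [xv, if_pos rfl, eq_self_iff_true, if_true]; field_simp; ring
    · simp [xv, h]
  have hsum : ∑' j, xv j = S / D + (lam o * z o)^2 / D := by
    rw [hxv, Summable.tsum_add (hS.div_const D) (summable_of_ne_finset_zero (s := {o})
      (fun b hb => by simp [Finset.mem_singleton.not.mp hb]))]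
    rw [tsum_div_const, tsum_ite_eq]
  have hxvo : xv o = ((lam o)^2 * (z o)^2 + lam o * z o) / D := by simp [xv]
  refine ⟨?_, ?_, ?_, ?_⟩
  · rw [hsum]
    show (1 + S) / D + (S / D + (lam o * z o)^2 / D) = 1
    field_simp
    simp only [D]; ring
  · rw [hxvo]
    show (1 + S) / D = 1 - (1 + S) / D * S / (1 + S) -
      ((lam o)^2 * (z o)^2 + lam o * z o) / D * (lam o * z o) / (1 + lam o * z o)
    field_simp
    simp only [D]; ring
  · rw [hxvo]
    show ((lam o)^2 * (z o)^2 + lam o * z o) / D = (1 + S) / D * (lam o * z o) / (1 + S) +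
      ((lam o)^2 * (z o)^2 + lam o * z o) / D * (lam o * z o) / (1 + lam o * z o)
    field_simp
    ring
  · intro j hj
    simp only [xv, if_neg hj]
    show lam j * z j / D = (1 + S) / D * (lam j * z j) / (1 + S)
    field_simp
end

section
/- Let k ≥ 1 be an integer and let (λ_i)_{i∈ℤ₀} be a family of positive reals. If (z_i)_{i∈ℤ₀} is a positive summable solution of the three-loop system of order k with sum A = Σ_{j∈ℤ₀} z_j, then the family (λ_i)_{i∈ℤ₀} is summable and Σ_{i∈ℤ₀} λ_i = A(1+A)^k − λ₁((1+z₁)^k − 1) − λ₂((1+z₂)^k − 1). -/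
/-- `(z_i)_{i∈ℤ₀}` is a positive summable solution of the three-loop system of order `k`
for the activities `(λ_i)_{i∈ℤ₀}`: all `z_i > 0`, `z` is summable with sum `A`, and
`z₁ = λ₁((1+z₁)/(1+A))^k`, `z₂ = λ₂((1+z₂)/(1+A))^k`, and
`z_i = λ_i (1/(1+A))^k` for `i ∉ {1,2}`. -/
def IsThreeLoopSolution (k : ℕ) (lam z : Z0 → ℝ) : Prop :=
  (∀ i, 0 < z i) ∧ Summable z ∧
    z ⟨1, one_ne_zero⟩ =
      lam ⟨1, one_ne_zero⟩ * ((1 + z ⟨1, one_ne_zero⟩) / (1 + ∑' j, z j)) ^ k ∧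
    z ⟨2, two_ne_zero⟩ =
      lam ⟨2, two_ne_zero⟩ * ((1 + z ⟨2, two_ne_zero⟩) / (1 + ∑' j, z j)) ^ k ∧
    ∀ i : Z0, (i : ℤ) ≠ 1 → (i : ℤ) ≠ 2 → z i = lam i * (1 / (1 + ∑' j, z j)) ^ k

theorem stmt10 (k : ℕ) (hk : 1 ≤ k) (lam z : Z0 → ℝ) (hlam : ∀ i, 0 < lam i)
    (hsol : IsThreeLoopSolution k lam z) :
    Summable lam ∧
      ∑' i, lam i =
        (∑' j, z j) * (1 + ∑' j, z j) ^ k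
          - lam ⟨1, one_ne_zero⟩ * ((1 + z ⟨1, one_ne_zero⟩) ^ k - 1)
          - lam ⟨2, two_ne_zero⟩ * ((1 + z ⟨2, two_ne_zero⟩) ^ k - 1) := by
  obtain ⟨hz, hsum, h1, h2, h3⟩ := hsol
  set A := ∑' j, z j with hA
  have hA0 : 0 ≤ A := tsum_nonneg fun i => (hz i).le
  have hA1 : (0:ℝ) < 1 + A := by linarith
  have hA1' : (1 + A) ≠ 0 := ne_of_gt hA1
  set i1 : Z0 := ⟨1, one_ne_zero⟩ with hi1def
  set i2 : Z0 := ⟨2, two_ne_zero⟩ with hi2def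
  have hne : i1 ≠ i2 := by
    intro h; have := congrArg Subtype.val h; simp [hi1def, hi2def] at this
  set g : Z0 → ℝ := fun i => z i * (1 + A) ^ k with hg
  have hg_sum : Summable g := hsum.mul_right _
  set f : Z0 → ℝ := fun i => lam i - g i with hf
  have hf0 : ∀ i ∉ ({i1, i2} : Finset Z0), f i = 0 := by
    intro i hi
    simp only [Finset.mem_insert, Finset.mem_singleton] at hi
    push_neg at hi
    have h1' : (i : ℤ) ≠ 1 := by
      intro h; exact hi.1 (Subtype.ext h)
    have h2' : (i : ℤ) ≠ 2 := by
      intro h; exact hi.2 (Subtype.ext h)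
    have := h3 i h1' h2'
    simp only [hf, hg, this]
    field_simp
    rw [one_div, inv_pow, inv_mul_cancel₀ (pow_ne_zero k hA1'), sub_self, mul_zero]
  have hf_sum : Summable f := summable_of_ne_finset_zero hf0
  have hlam_eq : lam = fun i => g i + f i := by
    funext i; simp [hf]
  have hlam_sum : Summable lam := by
    rw [hlam_eq]; exact hg_sum.add hf_sum
  refine ⟨hlam_sum, ?_⟩
  have htg : ∑' i, g i = A * (1 + A) ^ k := by
    simp only [hg]; rw [tsum_mul_right]
  have htf : ∑' i, f i = f i1 + f i2 := by
    rw [tsum_eq_sum hf0, Finset.sum_insert (by simpa using hne), Finset.sum_singleton]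
  have k1 : z i1 * (1 + A) ^ k = lam i1 * (1 + z i1) ^ k := by
    conv_lhs => rw [h1]
    rw [div_pow, mul_assoc, div_mul_cancel₀ _ (pow_ne_zero k hA1')]
  have k2 : z i2 * (1 + A) ^ k = lam i2 * (1 + z i2) ^ k := by
    conv_lhs => rw [h2]
    rw [div_pow, mul_assoc, div_mul_cancel₀ _ (pow_ne_zero k hA1')]
  have : ∑' i, lam i = ∑' i, g i + ∑' i, f i := by
    conv_lhs => rw [hlam_eq]
    exact Summable.tsum_add hg_sum hf_sum
  rw [this, htg, htf]
  simp only [hf, hg]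
  linarith
end

section
/- Let 0 < λ ≤ 49/9 and Λ > 0, and define q(x) = (1+x)⁴ − λ(x+2)(1+x)² + λΛ − 2λ² and Λ₁ = 8λ^{3/2} − 10λ. If Λ < Λ₁ then q has exactly one zero in the interval (2√λ − 1, ∞); if Λ ≥ Λ₁ then q has no zero in (2√λ − 1, ∞). -/
theorem stmt14 (lam Λ : ℝ) (h0 : 0 < lam) (h1 : lam ≤ 49 / 9) (hΛ : 0 < Λ) :
    let q : ℝ → ℝ := fun x => (1 + x) ^ 4 - lam * (x + 2) * (1 + x) ^ 2 + lam * Λ - 2 * lam ^ 2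
    let Λ₁ : ℝ := 8 * (lam * Real.sqrt lam) - 10 * lam
    (Λ < Λ₁ → ∃! x : ℝ, x ∈ Set.Ioi (2 * Real.sqrt lam - 1) ∧ q x = 0) ∧
      (Λ₁ ≤ Λ → ∀ x ∈ Set.Ioi (2 * Real.sqrt lam - 1), q x ≠ 0) := by
  intro q Λ₁
  set s := Real.sqrt lam with hsdef
  have hspos : 0 < s := Real.sqrt_pos.mpr h0
  have hs : s ^ 2 = lam := Real.sq_sqrt h0.le
  have hs7 : s ≤ 7 / 3 := by nlinarith
  have hcont : Continuous q := by
    simp only [q]; fun_prop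
  have hd : ∀ x : ℝ, HasDerivAt q
      ((1 + x) * (4 * (1 + x) ^ 2 - 3 * lam * (1 + x) - 2 * lam)) x := by
    intro x
    have h1x : HasDerivAt (fun x : ℝ => 1 + x) 1 x := (hasDerivAt_id x).const_add 1
    have h2x : HasDerivAt (fun x : ℝ => x + 2) 1 x := (hasDerivAt_id x).add_const 2
    have hA : HasDerivAt (fun x : ℝ => (1 + x) ^ 4) (4 * (1 + x) ^ 3 * 1) x := h1x.pow 4
    have hB : HasDerivAt (fun x : ℝ => (1 + x) ^ 2) (2 * (1 + x) ^ 1 * 1) x := h1x.pow 2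
    have hC : HasDerivAt (fun x : ℝ => lam * (x + 2) * (1 + x) ^ 2)
        ((lam * 1) * (1 + x) ^ 2 + (lam * (x + 2)) * (2 * (1 + x) ^ 1 * 1)) x :=
      (h2x.const_mul lam).mul hB
    have := ((hA.sub hC).add_const (lam * Λ)).sub_const (2 * lam ^ 2)
    refine this.congr_deriv ?_
    ring
  have hmono : StrictMonoOn q (Set.Ici (2 * s - 1)) := by
    apply strictMonoOn_of_deriv_pos (convex_Ici _) hcont.continuousOn
    intro x hx
    rw [interior_Ici, Set.mem_Ioi] at hx
    rw [(hd x).deriv]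
    have hu : 2 * s < 1 + x := by linarith
    have hupos : 0 < 1 + x := by linarith
    apply mul_pos hupos
    have hin : 0 < 4 * (1 + x) + 8 * s - 3 * s ^ 2 := by nlinarith
    have hpr : 0 < (1 + x - 2 * s) * (4 * (1 + x) + 8 * s - 3 * s ^ 2) :=
      mul_pos (by linarith) hin
    have h2 : 0 ≤ 2 * s ^ 2 * (7 - 3 * s) := by
      apply mul_nonneg (by positivity); linarith
    nlinarith [hpr, h2, hs]
  have hqa : q (2 * s - 1) = lam * (Λ - Λ₁) := by
    show (1 + (2 * s - 1)) ^ 4 - lam * ((2 * s - 1) + 2) * (1 + (2 * s - 1)) ^ 2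
        + lam * Λ - 2 * lam ^ 2 = lam * (Λ - (8 * (lam * s) - 10 * lam))
    linear_combination (16 * s ^ 2 - 8 * lam * s + 12 * lam) * hs
  constructor
  · intro hlt
    have hqaneg : q (2 * s - 1) < 0 := by
      rw [hqa]; exact mul_neg_of_pos_of_neg h0 (by linarith)
    set b : ℝ := 2 * lam + 2 + 2 * s with hbdef
    have hab : 2 * s - 1 < b := by linarith
    have hqb : 0 < q b := by
      show 0 < (1 + b) ^ 4 - lam * (b + 2) * (1 + b) ^ 2 + lam * Λ - 2 * lam ^ 2
      have hB : (3 : ℝ) + 2 * lam ≤ 1 + b := by simp only [hbdef]; linarith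
      have hBpos : (0 : ℝ) < 1 + b := by linarith
      nlinarith [mul_pos h0 hΛ, pow_pos hBpos 2, pow_pos hBpos 3,
        mul_pos (mul_pos hBpos hBpos) (mul_pos hBpos hBpos),
        mul_pos h0 hspos, sq_nonneg (1 + b - 2 * lam)]
    obtain ⟨x, hxmem, hqx⟩ := intermediate_value_Ioo hab.le hcont.continuousOn
      (Set.mem_Ioo.mpr ⟨hqaneg, hqb⟩)
    refine ⟨x, ⟨hxmem.1, hqx⟩, ?_⟩
    rintro y ⟨hy, hqy⟩
    exact hmono.injOn (Set.mem_Ici.mpr (le_of_lt hy)) (Set.mem_Ici.mpr (le_of_lt hxmem.1)) (by rw [hqy, hqx])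
  · intro hge x hx
    have hqa0 : 0 ≤ q (2 * s - 1) := by
      rw [hqa]; exact mul_nonneg h0.le (by linarith)
    have := hmono (Set.self_mem_Ici) (Set.mem_Ici.mpr (le_of_lt hx)) hx
    exact ne_of_gt (by linarith)
end

section
/- Let λ > 49/9 and Λ be reals, define q(x) = (1+x)⁴ − λ(x+2)(1+x)² + λΛ − 2λ² and x₃ = (3λ − 8 + √(9λ² + 32λ))/8. Then x₃ > 2√λ − 1, q is strictly decreasing on (2√λ − 1, x₃) and strictly increasing on (x₃, ∞), and q(x₃) = −(λ/512)·((9λ² + 32λ)·√(9λ² + 32λ) + 27λ³ + 144λ² − 512Λ + 1152λ). -/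
theorem stmt15 (lam Λ : ℝ) (h0 : 49 / 9 < lam) :
    let q : ℝ → ℝ := fun x => (1 + x) ^ 4 - lam * (x + 2) * (1 + x) ^ 2 + lam * Λ - 2 * lam ^ 2
    let x₃ : ℝ := (3 * lam - 8 + Real.sqrt (9 * lam ^ 2 + 32 * lam)) / 8
    2 * Real.sqrt lam - 1 < x₃ ∧
      StrictAntiOn q (Set.Ioo (2 * Real.sqrt lam - 1) x₃) ∧
      StrictMonoOn q (Set.Ioi x₃) ∧
      q x₃ = -(lam / 512) * ((9 * lam ^ 2 + 32 * lam) * Real.sqrt (9 * lam ^ 2 + 32 * lam)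
        + 27 * lam ^ 3 + 144 * lam ^ 2 - 512 * Λ + 1152 * lam) := by
  intro q x₃
  have hlam : (0:ℝ) < lam := by linarith
  set t := Real.sqrt lam with ht
  have ht2 : t ^ 2 = lam := Real.sq_sqrt hlam.le
  have htpos : 0 < t := Real.sqrt_pos.mpr hlam
  have ht73 : 7 / 3 < t := by nlinarith [ht2, htpos]
  set s := Real.sqrt (9 * lam ^ 2 + 32 * lam) with hs
  have hsnn : 0 ≤ s := Real.sqrt_nonneg _
  have hs2 : s ^ 2 = 9 * lam ^ 2 + 32 * lam := Real.sq_sqrt (by nlinarith)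
  have hs3 : 3 * lam ≤ s := by nlinarith [hs2, hsnn, hlam]
  have hx3 : x₃ = (3 * lam - 8 + s) / 8 := rfl
  have h1 : 2 * t - 1 < x₃ := by
    rw [hx3]
    nlinarith [hs2, hsnn, ht2, ht73, htpos, sq_nonneg (s - (16 * t - 3 * t ^ 2)),
      mul_pos htpos htpos]
  have hder : ∀ x : ℝ, HasDerivAt q
      ((1 + x) * (4 * x ^ 2 + (8 - 3 * lam) * x + (4 - 5 * lam))) x := by
    intro x
    have ha : HasDerivAt (fun x : ℝ => 1 + x) 1 x := (hasDerivAt_id x).const_add 1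
    have hb := ha.pow 4
    have hc : HasDerivAt (fun x : ℝ => x + 2) 1 x := (hasDerivAt_id x).add_const 2
    have hd := ha.pow 2
    have he := (hc.const_mul lam).mul hd
    have hf := ((hb.sub he).add_const (lam * Λ)).sub_const (2 * lam ^ 2)
    refine hf.congr_deriv ?_
    simp only [Pi.pow_apply]
    ring
  have hcont : Continuous q := by
    have : Differentiable ℝ q := fun x => (hder x).differentiableAt
    exact this.continuous
  have h2t1 : (0:ℝ) < 2 * t - 1 := by linarith
  refine ⟨h1, ?_, ?_, ?_⟩
  · apply strictAntiOn_of_deriv_neg (convex_Ioo _ _) hcont.continuousOn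
    intro x hx
    rw [interior_Ioo] at hx
    obtain ⟨hxa, hxb⟩ := hx
    rw [(hder x).deriv]
    have hx0 : 0 < 1 + x := by linarith
    have hu1 : 8 * x + 8 - 3 * lam < s := by
      rw [hx3] at hxb; linarith
    have hu2 : 0 < 8 * x + 8 - 3 * lam + s := by nlinarith [hs3, ht2, htpos]
    have hg : 4 * x ^ 2 + (8 - 3 * lam) * x + (4 - 5 * lam) < 0 := by
      nlinarith [mul_pos (sub_pos.mpr hu1) hu2, hs2]
    exact mul_neg_of_pos_of_neg hx0 hg
  · apply strictMonoOn_of_deriv_pos (convex_Ioi _) hcont.continuousOn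
    intro x hx
    rw [interior_Ioi] at hx
    rw [(hder x).deriv]
    have hxb : x₃ < x := hx
    rw [hx3] at hxb
    have hx0 : 0 < 1 + x := by nlinarith [hsnn]
    have hu1 : s < 8 * x + 8 - 3 * lam := by linarith
    have hu2 : 0 < 8 * x + 8 - 3 * lam + s := by linarith [hsnn]
    have hg : 0 < 4 * x ^ 2 + (8 - 3 * lam) * x + (4 - 5 * lam) := by
      nlinarith [mul_pos (sub_pos.mpr hu1) hu2, hs2]
    exact mul_pos hx0 hg
  · show (1 + x₃) ^ 4 - lam * (x₃ + 2) * (1 + x₃) ^ 2 + lam * Λ - 2 * lam ^ 2 = _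
    rw [hx3]
    linear_combination (s ^ 2 / 4096 + lam * s / 1024 - 9 * lam ^ 2 / 4096 - lam / 128) * hs2
end

section
/- Let λ > 49/9 and Λ > 0, define q(x) = (1+x)⁴ − λ(x+2)(1+x)² + λΛ − 2λ², Λ₁ = 8λ^{3/2} − 10λ and Λ₂ = (1/512)·((9λ² + 32λ)·√(9λ² + 32λ) + 27λ³ + 144λ² + 1152λ). Then Λ₁ < Λ₂, and the number of zeros of q in the interval (2√λ − 1, ∞) is: exactly one if Λ ≤ Λ₁; exactly two if Λ₁ < Λ < Λ₂; exactly one if Λ = Λ₂; and zero if Λ > Λ₂. -/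
set_option maxHeartbeats 1000000 in
theorem stmt16 (lam Λ : ℝ) (h0 : 49 / 9 < lam) (hΛ : 0 < Λ) :
    let q : ℝ → ℝ := fun x => (1 + x) ^ 4 - lam * (x + 2) * (1 + x) ^ 2 + lam * Λ - 2 * lam ^ 2
    let Λ₁ : ℝ := 8 * (lam * Real.sqrt lam) - 10 * lam
    let Λ₂ : ℝ := (1 / 512) * ((9 * lam ^ 2 + 32 * lam) * Real.sqrt (9 * lam ^ 2 + 32 * lam)
      + 27 * lam ^ 3 + 144 * lam ^ 2 + 1152 * lam)
    let Z : Set ℝ := {x : ℝ | x ∈ Set.Ioi (2 * Real.sqrt lam - 1) ∧ q x = 0}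
    Λ₁ < Λ₂ ∧
      (Λ ≤ Λ₁ → ∃! x : ℝ, x ∈ Z) ∧
      (Λ₁ < Λ → Λ < Λ₂ → ∃ a b : ℝ, a ≠ b ∧ Z = {a, b}) ∧
      (Λ = Λ₂ → ∃! x : ℝ, x ∈ Z) ∧
      (Λ₂ < Λ → Z = ∅) := by
  intro q Λ₁ Λ₂ Z
  have hlam0 : (0:ℝ) < lam := by linarith
  set s := Real.sqrt lam with hs_def
  have hs2 : s ^ 2 = lam := Real.sq_sqrt hlam0.le
  have hs73 : 7/3 < s := by
    have h1 : Real.sqrt (49/9) < s := Real.sqrt_lt_sqrt (by norm_num) h0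
    rwa [show (49:ℝ)/9 = (7/3)^2 by norm_num, Real.sqrt_sq (by norm_num)] at h1
  have hD0 : (0:ℝ) < 9 * lam ^ 2 + 32 * lam := by positivity
  set r := Real.sqrt (9 * lam ^ 2 + 32 * lam) with hr_def
  have hr2 : r ^ 2 = 9 * lam ^ 2 + 32 * lam := Real.sq_sqrt hD0.le
  have hr0 : 0 < r := Real.sqrt_pos.mpr hD0
  have hr3l : 3 * lam < r := by nlinarith
  have hr4l : r < 4 * lam := by nlinarith
  set T : ℝ := (3 * lam + r) / 8 with hT_def
  set a : ℝ := 2 * s - 1 with ha_def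
  set X : ℝ := T - 1 with hX_def
  set g : ℝ → ℝ := fun x => (1 + x) ^ 4 - lam * (x + 2) * (1 + x) ^ 2 with hg_def
  set c : ℝ := 2 * lam ^ 2 - lam * Λ with hc_def
  -- T > 2s
  have hT2s : 2 * s < T := by
    rcases le_or_gt (16 * s - 3 * lam) 0 with h | h
    · simp only [hT_def]; linarith
    · have h2 : (16 * s - 3 * lam) ^ 2 < r ^ 2 := by nlinarith
      have h3 : 16 * s - 3 * lam < r := by nlinarith
      simp only [hT_def]; linarith
  have haX : a < X := by simp only [ha_def, hX_def]; linarith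
  clear_value s r T a X c
  -- membership characterization
  have hZ : ∀ x, x ∈ Z ↔ (a < x ∧ g x = c) := by
    intro x
    simp only [Z, q, hg_def, hc_def, ha_def, Set.mem_setOf_eq, Set.mem_Ioi, ← hs_def]
    constructor
    · rintro ⟨h1, h2⟩; exact ⟨h1, by linarith⟩
    · rintro ⟨h1, h2⟩; exact ⟨h1, by linarith⟩
  -- derivative
  have hderiv : ∀ x : ℝ, HasDerivAt g
      ((1 + x) * (4 * (1 + x) ^ 2 - 3 * lam * (1 + x) - 2 * lam)) x := by
    intro x
    have h1 : HasDerivAt (fun y : ℝ => 1 + y) 1 x := by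
      simpa using (hasDerivAt_id x).const_add (1:ℝ)
    have h2 := h1.pow 4
    have h3 : HasDerivAt (fun y : ℝ => y + 2) 1 x := by
      simpa using (hasDerivAt_id x).add_const (2:ℝ)
    have h4 := (h3.const_mul lam).mul (h1.pow 2)
    have h5 := h2.sub h4
    refine h5.congr_deriv ?_
    simp only [Pi.pow_apply]; push_cast; ring
  have hdiff : Differentiable ℝ g := fun x => (hderiv x).differentiableAt
  have hgc : Continuous g := hdiff.continuous
  clear_value g
  have hderiv' : ∀ x, deriv g x
      = (1 + x) * (4 * (1 + x) ^ 2 - 3 * lam * (1 + x) - 2 * lam) :=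
    fun x => (hderiv x).deriv
  -- strict anti on [a, X]
  have hanti : StrictAntiOn g (Set.Icc a X) := by
    apply strictAntiOn_of_deriv_neg (convex_Icc a X) hgc.continuousOn
    intro x hx
    rw [interior_Icc] at hx
    obtain ⟨hx1, hx2⟩ := hx
    rw [hderiv']
    have ht1 : 2 * s < 1 + x := by simp only [ha_def] at hx1; linarith
    have ht0 : 0 < 1 + x := by linarith
    have ht2 : 8 * (1 + x) < 3 * lam + r := by
      simp only [hX_def, hT_def] at hx2; linarith
    have hp1 : 0 < r - (8 * (1 + x) - 3 * lam) := by linarith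
    have hp2 : 0 < r + (8 * (1 + x) - 3 * lam) := by linarith
    have hq : 4 * (1 + x) ^ 2 - 3 * lam * (1 + x) - 2 * lam < 0 := by
      nlinarith [mul_pos hp1 hp2]
    exact mul_neg_of_pos_of_neg ht0 hq
  -- strict mono on [X, ∞)
  have hmono : StrictMonoOn g (Set.Ici X) := by
    apply strictMonoOn_of_deriv_pos (convex_Ici X) hgc.continuousOn
    intro x hx
    rw [interior_Ici] at hx
    rw [hderiv']
    have hx' : X < x := hx
    have ht2 : 3 * lam + r < 8 * (1 + x) := by
      simp only [hX_def, hT_def] at hx'; linarith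
    have ht0 : 0 < 1 + x := by linarith
    have hq : 0 < 4 * (1 + x) ^ 2 - 3 * lam * (1 + x) - 2 * lam := by
      nlinarith [mul_pos (show 0 < 8 * (1 + x) - 3 * lam - r by linarith)
        (show 0 < 8 * (1 + x) - 3 * lam + r by linarith)]
    exact mul_pos ht0 hq
  -- values
  have hga : g a = 2 * lam ^ 2 - lam * Λ₁ := by
    simp only [hg_def, ha_def, Λ₁, ← hs_def]
    linear_combination (16 * s ^ 2 - 8 * lam * s + 12 * lam) * hs2
  have hgX : g X = 2 * lam ^ 2 - lam * Λ₂ := by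
    simp only [hg_def, hX_def, hT_def, Λ₂, ← hr_def]
    linear_combination (r ^ 2 / 4096 + lam * r / 1024 - 9 * lam ^ 2 / 4096 - lam / 128) * hr2
  -- min facts
  have hmin : ∀ z, a < z → g X ≤ g z := by
    intro z hz
    rcases lt_trichotomy z X with h | h | h
    · exact (hanti ⟨hz.le, h.le⟩ (Set.right_mem_Icc.mpr haX.le) h).le
    · rw [h]
    · exact (hmono Set.self_mem_Ici (Set.mem_Ici.mpr h.le) h).le
  have hminstrict : ∀ z, a < z → z ≠ X → g X < g z := by
    intro z hz hne
    rcases le_or_gt z X with h | h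
    · exact hanti ⟨hz.le, h⟩ (Set.right_mem_Icc.mpr haX.le) (h.lt_of_ne hne)
    · exact hmono (Set.self_mem_Ici) (Set.mem_Ici.mpr h.le) h
  have hgXa : g X < g a :=
    hanti (Set.left_mem_Icc.mpr haX.le) (Set.right_mem_Icc.mpr haX.le) haX
  -- Λ₁ < Λ₂
  have hΛ12 : Λ₁ < Λ₂ := by
    rw [hga, hgX] at hgXa
    have h' : lam * Λ₁ < lam * Λ₂ := by linarith
    exact (mul_lt_mul_iff_right₀ hlam0).mp h'
  -- big point for IVT
  have hB : ∀ v : ℝ, ∃ Bx : ℝ, X ≤ Bx ∧ v < g Bx := by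
    intro v
    refine ⟨lam + |v| + 1, ?_, ?_⟩
    · rw [hX_def, hT_def]; linarith [abs_nonneg v]
    · simp only [hg_def]
      have h1 : v ≤ |v| := le_abs_self v
      have h2 : 0 ≤ |v| := abs_nonneg v
      set u := |v| with hu_def
      clear_value u
      have hid : (1 + (lam + u + 1)) ^ 4 - lam * ((lam + u + 1) + 2) * (1 + (lam + u + 1)) ^ 2
          = (lam + u + 2) ^ 2 * ((lam + u + 2) ^ 2 - lam * (lam + u + 2) - lam) := by ring
      have h4 : u + 1 ≤ (lam + u + 2) ^ 2 - lam * (lam + u + 2) - lam := by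
        have e : (lam + u + 2) ^ 2 - lam * (lam + u + 2) - lam
            = u ^ 2 + lam * u + lam + 4 * u + 4 := by ring
        rw [e]; linarith [sq_nonneg u, mul_nonneg hlam0.le h2]
      have h5 : (1:ℝ) ≤ (lam + u + 2) ^ 2 := by
        calc (1:ℝ) = 1 ^ 2 := by norm_num
        _ ≤ (lam + u + 2) ^ 2 := pow_le_pow_left₀ (by norm_num) (by linarith) 2
      have h6 : u + 1 ≤ (lam + u + 2) ^ 2 * ((lam + u + 2) ^ 2 - lam * (lam + u + 2) - lam) := by
        calc u + 1 = 1 * (u + 1) := by ring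
        _ ≤ (lam + u + 2) ^ 2 * ((lam + u + 2) ^ 2 - lam * (lam + u + 2) - lam) :=
          mul_le_mul h5 h4 (by linarith) (sq_nonneg _)
      linarith [hid ▸ h6]
  refine ⟨hΛ12, ?_, ?_, ?_, ?_⟩
  · -- Λ ≤ Λ₁ : unique zero
    intro hle
    have hcga : g a ≤ c := by
      have h' : lam * Λ ≤ lam * Λ₁ := mul_le_mul_of_nonneg_left hle hlam0.le
      rw [hga, hc_def]; linarith
    have hXc : g X < c := lt_of_lt_of_le hgXa hcga
    obtain ⟨Bx, hXB, hvB⟩ := hB c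
    obtain ⟨x₀, hx₀mem, hx₀⟩ := intermediate_value_Icc hXB hgc.continuousOn
      ⟨hXc.le, hvB.le⟩
    have hx₀X : X < x₀ := by
      rcases eq_or_lt_of_le hx₀mem.1 with heq | h
      · exfalso; rw [← heq] at hx₀; exact absurd hx₀ (ne_of_lt hXc)
      · exact h
    refine ⟨x₀, (hZ x₀).mpr ⟨haX.trans hx₀X, hx₀⟩, ?_⟩
    intro z hzZ
    obtain ⟨hza, hzc⟩ := (hZ z).mp hzZ
    have hzX : X < z := by
      by_contra h
      push_neg at h
      rcases eq_or_lt_of_le h with heq | hlt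
      · rw [heq] at hzc; exact absurd hzc (ne_of_lt hXc)
      · have hlt2 : g z < g a := hanti (Set.left_mem_Icc.mpr haX.le) ⟨hza.le, h⟩ hza
        rw [hzc] at hlt2
        linarith
    exact hmono.injOn (Set.mem_Ici.mpr hzX.le) (Set.mem_Ici.mpr hx₀X.le)
      (by rw [hzc, hx₀])
  · -- Λ₁ < Λ < Λ₂ : two zeros
    intro h1 h2
    have hcga : c < g a := by
      have h' : lam * Λ₁ < lam * Λ := (mul_lt_mul_iff_right₀ hlam0).mpr h1
      rw [hga, hc_def]; linarith
    have hXc : g X < c := by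
      have h' : lam * Λ < lam * Λ₂ := (mul_lt_mul_iff_right₀ hlam0).mpr h2
      rw [hgX, hc_def]; linarith
    -- zero on decreasing branch
    obtain ⟨b₁, hb₁mem, hb₁⟩ := intermediate_value_Icc' haX.le hgc.continuousOn
      ⟨hXc.le, hcga.le⟩
    have hb₁a : a < b₁ := by
      rcases eq_or_lt_of_le hb₁mem.1 with heq | h
      · exfalso; rw [← heq] at hb₁; exact absurd hb₁ (ne_of_gt hcga)
      · exact h
    -- zero on increasing branch
    obtain ⟨Bx, hXB, hvB⟩ := hB c
    obtain ⟨b₂, hb₂mem, hb₂⟩ := intermediate_value_Icc hXB hgc.continuousOn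
      ⟨hXc.le, hvB.le⟩
    have hb₂X : X < b₂ := by
      rcases eq_or_lt_of_le hb₂mem.1 with heq | h
      · exfalso; rw [← heq] at hb₂; exact absurd hb₂ (ne_of_lt hXc)
      · exact h
    refine ⟨b₁, b₂, by linarith [hb₁mem.2], ?_⟩
    ext z
    simp only [Set.mem_insert_iff, Set.mem_singleton_iff, hZ z]
    constructor
    · rintro ⟨hza, hzc⟩
      rcases le_or_gt z X with h | h
      · left
        exact hanti.injOn ⟨hza.le, h⟩ ⟨hb₁mem.1, hb₁mem.2⟩ (by rw [hzc, hb₁])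
      · right
        exact hmono.injOn (Set.mem_Ici.mpr h.le) (Set.mem_Ici.mpr hb₂X.le)
          (by rw [hzc, hb₂])
    · rintro (rfl | rfl)
      · exact ⟨hb₁a, hb₁⟩
      · exact ⟨haX.trans hb₂X, hb₂⟩
  · -- Λ = Λ₂ : unique zero at X
    intro heq
    have hcX : c = g X := by rw [hgX, hc_def, heq]
    refine ⟨X, (hZ X).mpr ⟨haX, hcX.symm⟩, ?_⟩
    intro z hzZ
    obtain ⟨hza, hzc⟩ := (hZ z).mp hzZ
    by_contra hne
    have := hminstrict z hza hne
    rw [hzc, hcX] at this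
    exact lt_irrefl _ this
  · -- Λ₂ < Λ : no zeros
    intro hlt
    have hcX : c < g X := by
      have h' : lam * Λ₂ < lam * Λ := (mul_lt_mul_iff_right₀ hlam0).mpr hlt
      rw [hgX, hc_def]; linarith
    ext z
    simp only [hZ z, Set.mem_empty_iff_false, iff_false, not_and]
    intro hza hzc
    have := hmin z hza
    rw [hzc] at this
    exact absurd this (not_le_of_gt hcX)
end
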